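/- Let X = {x_1, …, x_k} be a set of variables and Q = {q_1, …, q_s} a set of clauses, each clause being a set of exactly three variables from X (no negations). Construct the graph G as follows: G has a vertex q_i for each clause, and the set Q of clause vertices forms a clique; for each variable x_i, G has a pair of adjacent vertices x_i and a_i, where a_i is adjacent only to x_i; each clause vertex q_j is adjacent to exactly the variable vertices x_i with x_i ∈ q_j. Then G is unipolar with clique split Q, {x_1,a_1}, …, {x_k,a_k}, and G has a perfect code if and only if there exists a truth assignment to X setting exactly one variable in each clause of Q to TRUE. -/

import Mathlib

/-- A perfect code in `G` is an independent set `D` such that every vertex is either in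
`D` or has exactly one neighbor in `D`. -/
def IsPerfectCode {V : Type*} (G : SimpleGraph V) (D : Set V) : Prop :=
  D.Pairwise (fun u v => ¬ G.Adj u v) ∧
  ∀ v : V, v ∈ D ∨ ∃! u : V, u ∈ D ∧ G.Adj v u


/-- The graph built from a One-in-Three 3SAT instance with clauses `Q` over variables
`Fin k`: clause vertices `Sum.inl j` form a clique, each variable has a pair of adjacent
vertices `Sum.inr (Sum.inl i)` (the variable vertex) and `Sum.inr (Sum.inr i)` (the
pendant vertex `a i`, adjacent only to the variable vertex), and each clause vertex is
adjacent exactly to the variable vertices of its clause. -/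
def satGraph (k s : ℕ) (Q : Fin s → Finset (Fin k)) :
    SimpleGraph (Fin s ⊕ (Fin k ⊕ Fin k)) :=
  SimpleGraph.fromRel fun u v =>
    match u, v with
    | Sum.inl _, Sum.inl _ => True
    | Sum.inl j, Sum.inr (Sum.inl i) => i ∈ Q j
    | Sum.inr (Sum.inl i), Sum.inr (Sum.inr i2) => i = i2
    | _, _ => False

/-- A clique split of a graph `G`: the vertex set is partitioned into a center clique `H`
and peripheral cliques `P 0, …, P (k-1)` with no edges between distinct peripheral cliques. -/
structure IsCliqueSplit {V : Type*} (G : SimpleGraph V) (H : Set V) {k : ℕ}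
    (P : Fin k → Set V) : Prop where
  center_clique : G.IsClique H
  periph_clique : ∀ i, G.IsClique (P i)
  center_disj : ∀ i, Disjoint H (P i)
  periph_disj : ∀ i j, i ≠ j → Disjoint (P i) (P j)
  covers : H ∪ (⋃ i, P i) = Set.univ
  no_cross : ∀ i j, i ≠ j → ∀ u ∈ P i, ∀ v ∈ P j, ¬ G.Adj u v

namespace SatAux

variable {k s : ℕ} {Q : Fin s → Finset (Fin k)}

lemma adj_ll {j j' : Fin s} : (satGraph k s Q).Adj (Sum.inl j) (Sum.inl j') ↔ j ≠ j' := by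
  simp [satGraph]

lemma adj_lx {j : Fin s} {i : Fin k} :
    (satGraph k s Q).Adj (Sum.inl j) (Sum.inr (Sum.inl i)) ↔ i ∈ Q j := by
  simp [satGraph]

lemma adj_la {j : Fin s} {i : Fin k} :
    ¬ (satGraph k s Q).Adj (Sum.inl j) (Sum.inr (Sum.inr i)) := by
  simp [satGraph]

lemma adj_xx {i i' : Fin k} :
    ¬ (satGraph k s Q).Adj (Sum.inr (Sum.inl i)) (Sum.inr (Sum.inl i')) := by
  simp [satGraph]

lemma adj_xa {i i' : Fin k} :
    (satGraph k s Q).Adj (Sum.inr (Sum.inl i)) (Sum.inr (Sum.inr i')) ↔ i = i' := by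
  simp [satGraph]

lemma adj_aa {i i' : Fin k} :
    ¬ (satGraph k s Q).Adj (Sum.inr (Sum.inr i)) (Sum.inr (Sum.inr i')) := by
  simp [satGraph]

end SatAux

open SatAux in
/-- The graph `satGraph k s Q` built from a One-in-Three 3SAT instance (no negations,
each clause a set of exactly three variables) is unipolar, with clique split whose center
is the clique of clause vertices and whose peripheral cliques are the pairs
`{x i, a i}`; and it has a perfect code if and only if some truth assignment sets exactly
one variable of each clause to TRUE. -/
theorem satGraph_unipolar_perfectCode_iff (k s : ℕ) (Q : Fin s → Finset (Fin k))
    (hQ : ∀ j, (Q j).card = 3) :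
    IsCliqueSplit (satGraph k s Q) (Set.range Sum.inl)
      (fun i => ({Sum.inr (Sum.inl i), Sum.inr (Sum.inr i)} : Set (Fin s ⊕ Fin k ⊕ Fin k))) ∧
    ((∃ D : Set (Fin s ⊕ Fin k ⊕ Fin k), IsPerfectCode (satGraph k s Q) D) ↔
      ∃ T : Set (Fin k), ∀ j : Fin s, ∃! i : Fin k, i ∈ Q j ∧ i ∈ T) := by
  constructor
  · refine ⟨?_, ?_, ?_, ?_, ?_, ?_⟩
    · rintro u ⟨j, rfl⟩ v ⟨j', rfl⟩ hne
      exact adj_ll.mpr (by rintro rfl; exact hne rfl)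
    · intro i u hu v hv hne
      rcases hu with rfl | rfl <;> rcases hv with rfl | rfl
      · exact absurd rfl hne
      · exact adj_xa.mpr rfl
      · exact (adj_xa.mpr rfl).symm
      · exact absurd rfl hne
    · intro i
      rw [Set.disjoint_left]
      rintro u ⟨j, rfl⟩ hu
      rcases hu with h | h <;> simp at h
    · intro i j hij
      rw [Set.disjoint_left]
      rintro u hu hv
      rcases hu with rfl | rfl <;> rcases hv with h | h <;>
        simp_all
    · ext v
      rcases v with j | (i | i) <;> simp
    · intro i j hij u hu v hv hadj
      rcases hu with rfl | rfl <;> rcases hv with rfl | rfl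
      · exact adj_xx hadj
      · exact hij (adj_xa.mp hadj)
      · exact hij (adj_xa.mp hadj.symm).symm
      · exact adj_aa hadj
  · constructor
    · rintro ⟨D, hind, hcode⟩
      -- no clause vertex is in D
      have hclause : ∀ j, Sum.inl j ∉ D := by
        intro j hj
        obtain ⟨i, hi⟩ := Finset.card_pos.mp (by rw [hQ j]; norm_num)
        have hx : Sum.inr (Sum.inl i) ∉ D := fun hx =>
          hind hj hx (by simp) (adj_lx.mpr hi)
        rcases hcode (Sum.inr (Sum.inr i)) with ha | ⟨u, ⟨huD, hadj⟩, _⟩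
        · rcases hcode (Sum.inr (Sum.inl i)) with hx' | ⟨u, hu, huniq⟩
          · exact hx hx'
          · have h1 := huniq (Sum.inl j) ⟨hj, (adj_lx.mpr hi).symm⟩
            have h2 := huniq (Sum.inr (Sum.inr i)) ⟨ha, adj_xa.mpr rfl⟩
            rw [← h1] at h2
            exact Sum.inr_ne_inl h2
        · rcases u with j' | (i' | i')
          · exact adj_la hadj.symm
          · obtain rfl : i' = i := adj_xa.mp hadj.symm
            exact hx huD
          · exact adj_aa hadj
      refine ⟨{i | Sum.inr (Sum.inl i) ∈ D}, fun j => ?_⟩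
      rcases hcode (Sum.inl j) with hj | ⟨u, ⟨huD, hadj⟩, huniq⟩
      · exact absurd hj (hclause j)
      rcases u with j' | (i | i)
      · exact absurd huD (hclause j')
      · refine ⟨i, ⟨adj_lx.mp hadj, huD⟩, ?_⟩
        intro i' ⟨hi'Q, hi'D⟩
        have := huniq (Sum.inr (Sum.inl i')) ⟨hi'D, adj_lx.mpr hi'Q⟩
        exact Sum.inl.inj (Sum.inr.inj this)
      · exact absurd hadj adj_la
    · rintro ⟨T, hT⟩
      refine ⟨{v | ∃ i, (v = Sum.inr (Sum.inl i) ∧ i ∈ T) ∨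
        (v = Sum.inr (Sum.inr i) ∧ i ∉ T)}, ?_, ?_⟩
      · rintro u ⟨i, hu⟩ v ⟨i', hv⟩ hne hadj
        rcases hu with ⟨rfl, hiT⟩ | ⟨rfl, hiT⟩ <;>
          rcases hv with ⟨rfl, hi'T⟩ | ⟨rfl, hi'T⟩
        · exact adj_xx hadj
        · exact hi'T (adj_xa.mp hadj ▸ hiT)
        · exact hiT ((adj_xa.mp hadj.symm) ▸ hi'T)
        · exact adj_aa hadj
      · rintro (j | (i | i))
        · right
          obtain ⟨i, ⟨hiQ, hiT⟩, huniq⟩ := hT j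
          refine ⟨Sum.inr (Sum.inl i), ⟨⟨i, Or.inl ⟨rfl, hiT⟩⟩, adj_lx.mpr hiQ⟩, ?_⟩
          rintro u ⟨⟨i', hu⟩, hadj⟩
          rcases hu with ⟨rfl, hi'T⟩ | ⟨rfl, hi'T⟩
          · exact congrArg (Sum.inr ∘ Sum.inl) (huniq i' ⟨adj_lx.mp hadj, hi'T⟩)
          · exact absurd hadj adj_la
        · by_cases hiT : i ∈ T
          · exact Or.inl ⟨i, Or.inl ⟨rfl, hiT⟩⟩
          · right
            refine ⟨Sum.inr (Sum.inr i), ⟨⟨i, Or.inr ⟨rfl, hiT⟩⟩, adj_xa.mpr rfl⟩, ?_⟩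
            rintro u ⟨⟨i', hu⟩, hadj⟩
            rcases hu with ⟨rfl, hi'T⟩ | ⟨rfl, hi'T⟩
            · exact absurd hadj adj_xx
            · rw [adj_xa.mp hadj]
        · by_cases hiT : i ∈ T
          · right
            refine ⟨Sum.inr (Sum.inl i), ⟨⟨i, Or.inl ⟨rfl, hiT⟩⟩, (adj_xa.mpr rfl).symm⟩, ?_⟩
            rintro u ⟨⟨i', hu⟩, hadj⟩
            rcases hu with ⟨rfl, hi'T⟩ | ⟨rfl, hi'T⟩
            · rw [adj_xa.mp hadj.symm]
            · exact absurd hadj adj_aa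
          · exact Or.inl ⟨i, Or.inr ⟨rfl, hiT⟩⟩
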